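/- Let (X, d) be a metric space, K ∈ ℝ, N < 0, and f : X → [−∞,+∞]. Let (x_s)_{s∈[0,1]} be a geodesic with x₀ ∈ D[f] and d := d(x₀, x₁) < π·√(N/K) when K < 0, along which the (K,N)-convexity inequality holds, i.e. f_N(x_t) ≤ σ_{K,N}^{(1−t)}(d)·f_N(x₀) + σ_{K,N}^{(t)}(d)·f_N(x₁) for all t ∈ [0,1]. Then the directional derivative of f_N at x₀ along this geodesic satisfies f_N′(x₀; x) ≤ (d/𝔰_{K,N}(d))·(f_N(x₁) − 𝔠_{K,N}(d)·f_N(x₀)). -/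

import Mathlib

open Filter MeasureTheory Set
open scoped ENNReal Topology

noncomputable section

namespace KNPaper

variable {X : Type*} [MetricSpace X]

/-- A geodesic parametrized on `[0,1]`: `d(γ s, γ t) = |t - s| * d(γ 0, γ 1)`. -/
def IsGeodesic (γ : ℝ → X) : Prop :=
  ∀ s ∈ Set.Icc (0:ℝ) 1, ∀ t ∈ Set.Icc (0:ℝ) 1,
    dist (γ s) (γ t) = |t - s| * dist (γ 0) (γ 1)

/-- Extended exponential `EReal → ℝ≥0∞`, with `exp ⊥ = 0` and `exp ⊤ = ⊤`. -/
def eexp (x : EReal) : ℝ≥0∞ :=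
  if x = ⊤ then ⊤ else if x = ⊥ then 0 else ENNReal.ofReal (Real.exp x.toReal)

/-- The nonnegative part of an extended real, valued in `ℝ≥0∞`. -/
def epos (x : EReal) : ℝ≥0∞ :=
  if x = ⊤ then ⊤ else ENNReal.ofReal x.toReal

/-- `f_N := exp (-f/N)`, with the conventions `exp(-∞) = 0`, `exp(+∞) = +∞`. -/
def fN (f : X → EReal) (N : ℝ) (x : X) : ℝ≥0∞ :=
  eexp (((-1/N : ℝ) : EReal) * f x)

/-- The finiteness domain `D[f]`. -/
def Dom (f : X → EReal) : Set X := {x | f x ≠ ⊤ ∧ f x ≠ ⊥}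

/-- The extended domain `D*[f]`. -/
def DomStar (f : X → EReal) : Set X := {x | f x ≠ ⊤}

/-- The function `𝔰_{K,N}`. -/
def sKN (K N θ : ℝ) : ℝ :=
  if K < 0 then Real.sin (θ * Real.sqrt (K/N)) / Real.sqrt (K/N)
  else if K = 0 then θ
  else Real.sinh (θ * Real.sqrt (-K/N)) / Real.sqrt (-K/N)

/-- The function `𝔠_{K,N}`. -/
def cKN (K N θ : ℝ) : ℝ :=
  if K < 0 then Real.cos (θ * Real.sqrt (K/N))
  else if K = 0 then 1
  else Real.cosh (θ * Real.sqrt (-K/N))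

/-- The distortion coefficient `σ_{K,N}^{(t)}(θ)`, valued in `[0,∞]`. -/
def sigmaKN (K N t θ : ℝ) : ℝ≥0∞ :=
  if (N * Real.pi ^ 2 < K * θ ^ 2 ∧ K * θ ^ 2 < 0) ∨ 0 < K * θ ^ 2 then
    ENNReal.ofReal (sKN K N (t * θ) / sKN K N θ)
  else if K * θ ^ 2 = 0 then ENNReal.ofReal t
  else ⊤

/-- `(K,N)`-convexity of `f` on a subset `s` (with `N < 0`). -/
def KNConvexOn (f : X → EReal) (K N : ℝ) (s : Set X) : Prop :=
  ∀ x₀ ∈ s, ∀ x₁ ∈ s, f x₀ ≠ ⊤ → f x₁ ≠ ⊤ →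
    (K < 0 → dist x₀ x₁ < Real.pi * Real.sqrt (N / K)) →
    ∃ γ : ℝ → X, IsGeodesic γ ∧ (∀ t ∈ Set.Icc (0:ℝ) 1, γ t ∈ s) ∧ γ 0 = x₀ ∧ γ 1 = x₁ ∧
      ∀ t ∈ Set.Icc (0:ℝ) 1,
        fN f N (γ t) ≤ sigmaKN K N (1 - t) (dist x₀ x₁) * fN f N x₀
          + sigmaKN K N t (dist x₀ x₁) * fN f N x₁

/-- `(K,N)`-convexity of `f` (with `N < 0`). -/
def KNConvex (f : X → EReal) (K N : ℝ) : Prop := KNConvexOn f K N Set.univ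

/-- `λ`-convexity of an extended-real-valued function along geodesics. -/
def LambdaConvex (g : X → EReal) (lam : ℝ) : Prop :=
  ∀ x₀ x₁ : X, x₀ ∈ Dom g → x₁ ∈ Dom g →
    ∃ γ : ℝ → X, IsGeodesic γ ∧ γ 0 = x₀ ∧ γ 1 = x₁ ∧
      ∀ t ∈ Set.Icc (0:ℝ) 1,
        g (γ t) ≤ (((1 - t) * (g x₀).toReal + t * (g x₁).toReal
          - lam / 2 * (t * (1 - t)) * dist x₀ x₁ ^ 2 : ℝ) : EReal)

/-- Upper right Dini derivative of a real function, valued in `EReal`. -/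
def diniUR (g : ℝ → ℝ) (t : ℝ) : EReal :=
  Filter.limsup (fun h : ℝ => (((g (t + h) - g t) / h : ℝ) : EReal)) (𝓝[>] (0:ℝ))

/-- The time interval `(0,T)` for `T ∈ (0,∞]`, as a set of reals. -/
def domT (T : ℝ≥0∞) : Set ℝ := {t : ℝ | 0 < t ∧ ENNReal.ofReal t < T}

/-- `EVI_λ` gradient curve for `g` on `(0,T)`. -/
def IsEVIlam (g : X → EReal) (lam : ℝ) (T : ℝ≥0∞) (z : ℝ → X) : Prop :=
  0 < T ∧ ContinuousOn z (domT T) ∧ (∀ t ∈ domT T, z t ∈ Dom g) ∧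
    ∀ t ∈ domT T, ∀ x ∈ Dom g,
      diniUR (fun s => dist (z s) x ^ 2 / 2) t + ((lam / 2 * dist (z t) x ^ 2 : ℝ) : EReal)
        ≤ (((g x).toReal - (g (z t)).toReal : ℝ) : EReal)

/-- `EVI_{K,N}` gradient curve for `f` on `(0,T)` (with `N < 0`). -/
def IsEVIKN (f : X → EReal) (K N : ℝ) (T : ℝ≥0∞) (y : ℝ → X) : Prop :=
  0 < T ∧ ContinuousOn y (domT T) ∧ (∀ t ∈ domT T, y t ∈ Dom f) ∧
    ∀ t ∈ domT T, ∀ x ∈ closure (Dom f),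
      (K < 0 → dist (y t) x < Real.pi * Real.sqrt (N / K)) →
      diniUR (fun s => sKN K N (dist (y s) x / 2) ^ 2) t
          + ((K * sKN K N (dist (y t) x / 2) ^ 2 : ℝ) : EReal)
        ≤ ((N / 2 : ℝ) : EReal) * (1 - ((fN f N x / fN f N (y t) : ℝ≥0∞) : EReal))

/-- A curve starts at `y₀` if `y_t → y₀` as `t ↓ 0`. -/
def StartsAt (y : ℝ → X) (y₀ : X) : Prop := Filter.Tendsto y (𝓝[>] (0:ℝ)) (𝓝 y₀)

/-- The class `𝒞` of continuous curves on `(0,T)` with values in `D[f]`. -/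
def InC (f : X → EReal) (T : ℝ≥0∞) (y : ℝ → X) : Prop :=
  0 < T ∧ ContinuousOn y (domT T) ∧ ∀ t ∈ domT T, y t ∈ Dom f

/-- The class `𝒞'`: curves in `𝒞` along which `f` is non-increasing. -/
def InC' (f : X → EReal) (T : ℝ≥0∞) (y : ℝ → X) : Prop :=
  InC f T y ∧ ∀ s ∈ domT T, ∀ t ∈ domT T, s ≤ t → f (y t) ≤ f (y s)

/-- The class `𝒞''_N`: curves in `𝒞'` with `∫₀^{min(T,1)} f_N(y_t) dt < ∞`. -/
def InC'' (f : X → EReal) (N : ℝ) (T : ℝ≥0∞) (y : ℝ → X) : Prop :=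
  InC' f T y ∧ ∫⁻ t in Set.Ioo (0:ℝ) ((min T 1).toReal), fN f N (y t) < ⊤

/-- The function `α(t) = -N ∫₀ᵗ f_N(y_r)⁻¹ dr`. -/
def alphaMap (f : X → EReal) (N : ℝ) (y : ℝ → X) (t : ℝ) : ℝ :=
  -N * ∫ r in Set.Ioo (0:ℝ) t, ((fN f N (y r))⁻¹).toReal

/-- The final time `T' = lim_{t→T⁻} α(t)` of the reparametrized curve `ℛ₁(y)`. -/
def R1T (f : X → EReal) (N : ℝ) (T : ℝ≥0∞) (y : ℝ → X) : ℝ≥0∞ :=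
  ⨆ t ∈ domT T, ENNReal.ofReal (alphaMap f N y t)

/-- The reparametrized curve `ℛ₁(y) = y ∘ φ`, `φ = α⁻¹`. -/
def R1fun (f : X → EReal) (N : ℝ) (T : ℝ≥0∞) (y : ℝ → X) : ℝ → X :=
  y ∘ Function.invFunOn (alphaMap f N y) (domT T)

/-- The function `β(s) = -(1/N) ∫₀ˢ f_N(z_r) dr`. -/
def betaMap (f : X → EReal) (N : ℝ) (z : ℝ → X) (s : ℝ) : ℝ :=
  -(1/N) * ∫ r in Set.Ioo (0:ℝ) s, (fN f N (z r)).toReal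

/-- The final time `T = lim_{s→T'⁻} β(s)` of the reparametrized curve `ℛ₂(z)`. -/
def R2T (f : X → EReal) (N : ℝ) (T' : ℝ≥0∞) (z : ℝ → X) : ℝ≥0∞ :=
  ⨆ s ∈ domT T', ENNReal.ofReal (betaMap f N z s)

/-- The reparametrized curve `ℛ₂(z) = z ∘ ψ`, `ψ = β⁻¹`. -/
def R2fun (f : X → EReal) (N : ℝ) (T' : ℝ≥0∞) (z : ℝ → X) : ℝ → X :=
  z ∘ Function.invFunOn (betaMap f N z) (domT T')

/-- The descending slope `|D⁻f|(y) = limsup_{z→y} (f(y)-f(z))⁺ / d(z,y)`, in `[0,∞]`. -/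
def descSlope (f : X → EReal) (y : X) : ℝ≥0∞ :=
  Filter.limsup (fun z : X => epos (f y - f z) / ENNReal.ofReal (dist z y)) (𝓝[≠] y)

/-- Directional derivative `g'(γ 0; ·) = liminf_{t↓0} (g(γ t) - g(γ 0))/t` along a curve. -/
def dirDeriv (g : X → EReal) (γ : ℝ → X) : EReal :=
  Filter.liminf (fun t : ℝ => (g (γ t) - g (γ 0)) * (((1/t : ℝ)) : EReal)) (𝓝[>] (0:ℝ))

/-- The quantity `[ẏ, z]_{t₀} = sup_{0<s≤1} (1/(2s)) (d⁺/dt)|_{t₀} d(y_t, z_s)²`. -/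
def bracket (y z : ℝ → X) (t₀ : ℝ) : EReal :=
  ⨆ s ∈ Set.Ioc (0:ℝ) 1,
    (((1 / (2 * s) : ℝ)) : EReal) * diniUR (fun t => dist (y t) (z s) ^ 2) t₀

/-- Metric speed `|γ̇|(t) = lim_{h→0} d(γ(t+h), γ(t))/|h| = v`. -/
def HasMetricSpeedAt (γ : ℝ → X) (t v : ℝ) : Prop :=
  Filter.Tendsto (fun h : ℝ => dist (γ (t + h)) (γ t) / |h|) (𝓝[≠] (0:ℝ)) (𝓝 v)

open Classical in
/-- The metric speed of a curve at a time (defaulting to `0` when it does not exist). -/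
def metricSpeed (γ : ℝ → X) (t : ℝ) : ℝ :=
  if h : ∃ v, HasMetricSpeedAt γ t v then h.choose else 0

/-- Metric absolute continuity on `[s,t]` with derivative control in `Lᵖ`. -/
def MetricACWith (p : ℝ≥0∞) (γ : ℝ → X) (s t : ℝ) : Prop :=
  ∃ g : ℝ → ℝ, MeasureTheory.MemLp g p (MeasureTheory.volume.restrict (Set.Icc s t)) ∧
    ∀ u ∈ Set.Icc s t, ∀ v ∈ Set.Icc s t, u ≤ v → dist (γ u) (γ v) ≤ ∫ r in u..v, g r

/-- `ACᵖ_loc` on a set: metric absolute continuity on every compact subinterval. -/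
def LocACOn (p : ℝ≥0∞) (γ : ℝ → X) (I : Set ℝ) : Prop :=
  ∀ s t : ℝ, s ≤ t → Set.Icc s t ⊆ I → MetricACWith p γ s t

/-- Curve of maximal slope for `f` on `(0,T)`. -/
def IsMaxSlopeCurve (f : X → EReal) (T : ℝ≥0∞) (y : ℝ → X) : Prop :=
  0 < T ∧ (∀ t ∈ domT T, y t ∈ Dom f) ∧
  LocACOn 1 y (domT T) ∧
  LocACOn 1 (fun t => (f (y t)).toReal) (domT T) ∧
  (∀ᵐ t ∂(MeasureTheory.volume.restrict (domT T)), ∃ v : ℝ, HasMetricSpeedAt y t v) ∧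
  ∀ᵐ t ∂(MeasureTheory.volume.restrict (domT T)),
    ∃ d : ℝ, HasDerivAt (fun s => (f (y s)).toReal) d t ∧
      ENNReal.ofReal (2⁻¹ * metricSpeed y t ^ 2) + 2⁻¹ * descSlope f (y t) ^ 2
        ≤ ENNReal.ofReal (-d)

end KNPaper


namespace KNPaper

variable {K N : ℝ}

lemma sKN_zero (K N : ℝ) : sKN K N 0 = 0 := by
  unfold sKN; split_ifs <;> simp

lemma cKN_zero (K N : ℝ) : cKN K N 0 = 1 := by
  unfold cKN; split_ifs <;> simp

lemma hasDerivAt_sKN (K : ℝ) (hN : N < 0) (d t₀ : ℝ) :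
    HasDerivAt (fun t : ℝ => sKN K N (t * d)) (d * cKN K N (t₀ * d)) t₀ := by
  rcases lt_trichotomy K 0 with hK | hK | hK
  · have hκ : 0 < Real.sqrt (K/N) := Real.sqrt_pos.mpr (div_pos_of_neg_of_neg hK hN)
    set κ := Real.sqrt (K/N) with hκdef
    have h1 : HasDerivAt (fun t : ℝ => Real.sin (t * d * κ))
        (Real.cos (t₀ * d * κ) * (d * κ)) t₀ := by
      have hi : HasDerivAt (fun t : ℝ => t * d * κ) (d * κ) t₀ := by
        simpa using ((hasDerivAt_id t₀).mul_const d).mul_const κ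
      exact (Real.hasDerivAt_sin (t₀ * d * κ)).comp t₀ hi
    have h2 := h1.div_const κ
    have he : (fun t : ℝ => sKN K N (t * d)) = fun t : ℝ => Real.sin (t * d * κ) / κ := by
      funext t; simp [sKN, if_pos hK, mul_assoc, hκdef]
    rw [he, show d * cKN K N (t₀ * d) = Real.cos (t₀ * d * κ) * (d * κ) / κ by
      simp [cKN, if_pos hK, mul_assoc]; field_simp; ring]
    exact h2
  · subst hK
    have he : (fun t : ℝ => sKN 0 N (t * d)) = fun t : ℝ => t * d := by
      funext t; simp [sKN]
    rw [he, show d * cKN 0 N (t₀ * d) = d by simp [cKN]]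
    simpa using (hasDerivAt_id t₀).mul_const d
  · have hκ : 0 < Real.sqrt (-K/N) := Real.sqrt_pos.mpr (div_pos_of_neg_of_neg (by linarith) hN)
    set κ := Real.sqrt (-K/N) with hκdef
    have h1 : HasDerivAt (fun t : ℝ => Real.sinh (t * d * κ))
        (Real.cosh (t₀ * d * κ) * (d * κ)) t₀ := by
      have hi : HasDerivAt (fun t : ℝ => t * d * κ) (d * κ) t₀ := by
        simpa using ((hasDerivAt_id t₀).mul_const d).mul_const κ
      exact (Real.hasDerivAt_sinh (t₀ * d * κ)).comp t₀ hi
    have h2 := h1.div_const κ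
    have he : (fun t : ℝ => sKN K N (t * d)) = fun t : ℝ => Real.sinh (t * d * κ) / κ := by
      funext t; simp [sKN, if_neg (not_lt.mpr hK.le), if_neg hK.ne', mul_assoc, hκdef]
    rw [he, show d * cKN K N (t₀ * d) = Real.cosh (t₀ * d * κ) * (d * κ) / κ by
      simp only [cKN, if_neg (not_lt.mpr hK.le), if_neg hK.ne']; rw [← hκdef]; field_simp]
    exact h2

lemma sqrt_mul_sqrt_NK (hK : K < 0) (hN : N < 0) :
    Real.sqrt (N/K) * Real.sqrt (K/N) = 1 := by
  rw [← Real.sqrt_mul (le_of_lt (div_pos_of_neg_of_neg hN hK))]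
  rw [show N/K * (K/N) = 1 by
    field_simp
    rw [mul_comm N K]
    exact div_self (ne_of_gt (mul_pos_of_neg_of_neg hK hN))]
  exact Real.sqrt_one

lemma sKN_pos (hN : N < 0) {d : ℝ} (hd0 : 0 < d)
    (hd : K < 0 → d < Real.pi * Real.sqrt (N / K)) : 0 < sKN K N d := by
  rcases lt_trichotomy K 0 with hK | hK | hK
  · have hκ : 0 < Real.sqrt (K/N) := Real.sqrt_pos.mpr (div_pos_of_neg_of_neg hK hN)
    have harg : d * Real.sqrt (K/N) < Real.pi := by
      have := mul_lt_mul_of_pos_right (hd hK) hκ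
      rwa [mul_assoc, sqrt_mul_sqrt_NK hK hN, mul_one] at this
    have : 0 < Real.sin (d * Real.sqrt (K/N)) :=
      Real.sin_pos_of_pos_of_lt_pi (by positivity) harg
    simp only [sKN, if_pos hK]
    positivity
  · simp [sKN, hK, hd0]
  · have hκ : 0 < Real.sqrt (-K/N) := Real.sqrt_pos.mpr (div_pos_of_neg_of_neg (by linarith) hN)
    have : 0 < Real.sinh (d * Real.sqrt (-K/N)) := Real.sinh_pos_iff.mpr (by positivity)
    simp only [sKN, if_neg (not_lt.mpr hK.le), if_neg hK.ne']
    positivity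

lemma sKN_nonneg (hN : N < 0) {d t : ℝ} (hd0 : 0 < d)
    (hd : K < 0 → d < Real.pi * Real.sqrt (N / K)) (ht0 : 0 ≤ t) (ht1 : t ≤ 1) :
    0 ≤ sKN K N (t * d) := by
  rcases lt_trichotomy K 0 with hK | hK | hK
  · have hκ : 0 < Real.sqrt (K/N) := Real.sqrt_pos.mpr (div_pos_of_neg_of_neg hK hN)
    have harg : d * Real.sqrt (K/N) < Real.pi := by
      have := mul_lt_mul_of_pos_right (hd hK) hκ
      rwa [mul_assoc, sqrt_mul_sqrt_NK hK hN, mul_one] at this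
    have h1 : t * d * Real.sqrt (K/N) ≤ Real.pi := by
      have : t * d ≤ d := by nlinarith
      nlinarith
    have : 0 ≤ Real.sin (t * d * Real.sqrt (K/N)) :=
      Real.sin_nonneg_of_nonneg_of_le_pi (by positivity) h1
    simp only [sKN, if_pos hK]
    positivity
  · simp [sKN, hK]; positivity
  · have hκ : 0 < Real.sqrt (-K/N) := Real.sqrt_pos.mpr (div_pos_of_neg_of_neg (by linarith) hN)
    have : 0 ≤ Real.sinh (t * d * Real.sqrt (-K/N)) := by
      rw [← Real.sinh_zero]
      exact Real.sinh_le_sinh.mpr (by positivity)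
    simp only [sKN, if_neg (not_lt.mpr hK.le), if_neg hK.ne']
    positivity

lemma sigmaKN_eq (hN : N < 0) {d : ℝ} (hd0 : 0 < d)
    (hd : K < 0 → d < Real.pi * Real.sqrt (N / K)) (t : ℝ) :
    sigmaKN K N t d = ENNReal.ofReal (sKN K N (t * d) / sKN K N d) := by
  rcases lt_trichotomy K 0 with hK | hK | hK
  · have hcond : N * Real.pi ^ 2 < K * d ^ 2 ∧ K * d ^ 2 < 0 := by
      constructor
      · have h1 : d ^ 2 < Real.pi ^ 2 * (N / K) := by
          have h2 := hd hK
          have h3 : (Real.pi * Real.sqrt (N/K))^2 = Real.pi^2 * (N/K) := by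
            rw [mul_pow, Real.sq_sqrt (le_of_lt (div_pos_of_neg_of_neg hN hK))]
          nlinarith [Real.pi_pos, Real.sqrt_nonneg (N/K)]
        have := mul_lt_mul_of_neg_left h1 hK
        rw [show K * (Real.pi^2 * (N/K)) = N * Real.pi^2 by field_simp [hK.ne]] at this
        linarith
      · exact mul_neg_of_neg_of_pos hK (by positivity)
    rw [sigmaKN, if_pos (Or.inl hcond)]
  · subst hK
    have hs : ∀ θ : ℝ, sKN 0 N θ = θ := fun θ => by simp [sKN]
    rw [sigmaKN, if_neg (by simp), if_pos (by simp), hs, hs, mul_div_assoc,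
      div_self hd0.ne', mul_one]
  · rw [sigmaKN, if_pos (Or.inr (by positivity))]

lemma fN_ne_top {X : Type*} (f : X → EReal) {N : ℝ} (hN : N < 0) {x : X} (hx : f x ≠ ⊤) :
    fN f N x ≠ ⊤ := by
  have hpos : (0:ℝ) < -1/N := div_pos_of_neg_of_neg (by norm_num) hN
  unfold fN eexp
  by_cases hb : f x = ⊥
  · rw [hb, EReal.coe_mul_bot_of_pos hpos]
    simp
  · lift f x to ℝ using ⟨hx, hb⟩ with r hr
    rw [← EReal.coe_mul, if_neg (EReal.coe_ne_top _), if_neg (EReal.coe_ne_bot _)]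
    exact ENNReal.ofReal_ne_top

lemma coe_ennreal_of_ne_top {x : ℝ≥0∞} (h : x ≠ ⊤) : (x : EReal) = ((x.toReal : ℝ) : EReal) := by
  rw [← EReal.toReal_coe_ennreal]
  exact (EReal.coe_toReal (by simp [EReal.coe_ennreal_eq_top_iff, h])
    (EReal.coe_ennreal_ne_bot x)).symm

end KNPaper

theorem stmt_8 {X : Type*} [MetricSpace X] (f : X → EReal) (K N : ℝ) (hN : N < 0)
    (γ : ℝ → X) (hγ : KNPaper.IsGeodesic γ) (h0 : γ 0 ∈ KNPaper.Dom f)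
    (hd : K < 0 → dist (γ 0) (γ 1) < Real.pi * Real.sqrt (N / K))
    (hconv : ∀ t ∈ Set.Icc (0:ℝ) 1,
      KNPaper.fN f N (γ t)
        ≤ KNPaper.sigmaKN K N (1 - t) (dist (γ 0) (γ 1)) * KNPaper.fN f N (γ 0)
          + KNPaper.sigmaKN K N t (dist (γ 0) (γ 1)) * KNPaper.fN f N (γ 1)) :
    KNPaper.dirDeriv (fun x => ((KNPaper.fN f N x : ℝ≥0∞) : EReal)) γ
      ≤ ((dist (γ 0) (γ 1) / KNPaper.sKN K N (dist (γ 0) (γ 1)) : ℝ) : EReal)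
          * (((KNPaper.fN f N (γ 1) : ℝ≥0∞) : EReal)
            - ((KNPaper.cKN K N (dist (γ 0) (γ 1))
                * (KNPaper.fN f N (γ 0)).toReal : ℝ) : EReal)) := by
  classical
  open KNPaper in
  set d : ℝ := dist (γ 0) (γ 1) with hdd
  have h0t : f (γ 0) ≠ ⊤ := h0.1
  have hfN0 : fN f N (γ 0) ≠ ⊤ := fN_ne_top f hN h0t
  set a : ℝ := (fN f N (γ 0)).toReal with ha
  have hg0 : ((fN f N (γ 0) : ℝ≥0∞) : EReal) = ((a : ℝ) : EReal) :=
    coe_ennreal_of_ne_top hfN0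
  have hdnn : (0:ℝ) ≤ d := by rw [hdd]; exact dist_nonneg
  rcases eq_or_lt_of_le hdnn with hd0 | hd0
  · -- degenerate case d = 0
    have hconst : ∀ t ∈ Set.Icc (0:ℝ) 1, γ t = γ 0 := by
      intro t ht
      have h := hγ 0 ⟨le_refl 0, zero_le_one⟩ t ht
      have h2 : dist (γ 0) (γ t) = 0 := by rw [h, ← hdd, ← hd0, mul_zero]
      
      exact (dist_eq_zero.mp h2).symm
    have hev : ∀ᶠ t in 𝓝[>] (0:ℝ),
        (((fN f N (γ t) : ℝ≥0∞) : EReal) - ((fN f N (γ 0) : ℝ≥0∞) : EReal))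
          * (((1/t : ℝ)) : EReal) = (0 : EReal) := by
      filter_upwards [Ioo_mem_nhdsGT_of_mem (left_mem_Ico.mpr one_pos)] with t ht
      rw [hconst t ⟨ht.1.le, ht.2.le⟩, hg0, ← EReal.coe_sub, sub_self, EReal.coe_zero, zero_mul]
    have hlhs : dirDeriv (fun x => ((fN f N x : ℝ≥0∞) : EReal)) γ = 0 := by
      unfold dirDeriv
      rw [Filter.liminf_congr hev, Filter.liminf_const]
    rw [hlhs, ← hd0, sKN_zero, zero_div, EReal.coe_zero, zero_mul]
  · -- main case d > 0
    have hsd : 0 < sKN K N d := sKN_pos hN hd0 hd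
    by_cases hb1 : fN f N (γ 1) = ⊤
    · rw [hb1]
      rw [show ((⊤ : ℝ≥0∞) : EReal) = ⊤ from rfl, EReal.top_sub_coe,
        EReal.mul_top_of_pos (by exact_mod_cast div_pos hd0 hsd)]
      exact le_top
    · set b : ℝ := (fN f N (γ 1)).toReal with hb
      have hg1 : ((fN f N (γ 1) : ℝ≥0∞) : EReal) = ((b : ℝ) : EReal) :=
        coe_ennreal_of_ne_top hb1
      have hofa : fN f N (γ 0) = ENNReal.ofReal a := (ENNReal.ofReal_toReal hfN0).symm
      have hofb : fN f N (γ 1) = ENNReal.ofReal b := (ENNReal.ofReal_toReal hb1).symm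
      have ha0 : 0 ≤ a := ENNReal.toReal_nonneg
      have hb0 : 0 ≤ b := ENNReal.toReal_nonneg
      set P : ℝ → ℝ := fun t =>
        (sKN K N ((1-t)*d)/sKN K N d * a + sKN K N (t*d)/sKN K N d * b - a) * (1/t) with hP
      have hev : ∀ᶠ t in 𝓝[>] (0:ℝ),
          (((fN f N (γ t) : ℝ≥0∞) : EReal) - ((fN f N (γ 0) : ℝ≥0∞) : EReal))
            * (((1/t : ℝ)) : EReal) ≤ ((P t : ℝ) : EReal) := by
        filter_upwards [Ioo_mem_nhdsGT_of_mem (left_mem_Ico.mpr one_pos)] with t ht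
        obtain ⟨ht0, ht1⟩ := ht
        have hc := hconv t ⟨ht0.le, ht1.le⟩
        rw [sigmaKN_eq hN hd0 hd, sigmaKN_eq hN hd0 hd, hofa, hofb] at hc
        have hs1 : 0 ≤ sKN K N ((1-t)*d)/sKN K N d :=
          div_nonneg (sKN_nonneg hN hd0 hd (by linarith) (by linarith)) hsd.le
        have hs2 : 0 ≤ sKN K N (t*d)/sKN K N d :=
          div_nonneg (sKN_nonneg hN hd0 hd ht0.le ht1.le) hsd.le
        rw [← ENNReal.ofReal_mul hs1, ← ENNReal.ofReal_mul hs2,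
          ← ENNReal.ofReal_add (by positivity) (by positivity)] at hc
        have hft : fN f N (γ t) ≠ ⊤ := ne_top_of_le_ne_top ENNReal.ofReal_ne_top hc
        have hfR : (fN f N (γ t)).toReal
            ≤ sKN K N ((1-t)*d)/sKN K N d * a + sKN K N (t*d)/sKN K N d * b :=
          ENNReal.toReal_le_of_le_ofReal (by positivity) hc
        rw [coe_ennreal_of_ne_top hft, hg0, ← EReal.coe_sub, ← EReal.coe_mul,
          EReal.coe_le_coe_iff]
        exact mul_le_mul_of_nonneg_right (sub_le_sub_right hfR a) (by positivity)
      -- the limit of P as t ↓ 0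
      have hder1 : HasDerivAt (fun t : ℝ => sKN K N ((1-t)*d)) (-(d * cKN K N d)) 0 := by
        have hinner : HasDerivAt (fun t : ℝ => 1 - t) (-1 : ℝ) 0 := by
          simpa using (hasDerivAt_id' (0:ℝ)).const_sub (1:ℝ)
        have h := (hasDerivAt_sKN K hN d (1 - 0)).comp 0 hinner
        simp only [Function.comp_def] at h
        have e : -(d * cKN K N d) = d * cKN K N ((1 - 0) * d) * -1 := by norm_num
        rw [e]; exact h
      have hg1lim : Tendsto (fun t => (sKN K N ((1-t)*d) - sKN K N d)/t) (𝓝[>] (0:ℝ))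
          (𝓝 (-(d * cKN K N d))) := by
        have h := hasDerivAt_iff_tendsto_slope.mp hder1
        have h2 : Tendsto (fun t => (sKN K N ((1-t)*d) - sKN K N d)/t) (𝓝[≠] (0:ℝ))
            (𝓝 (-(d * cKN K N d))) := by
          refine h.congr' ?_
          filter_upwards [self_mem_nhdsWithin] with t ht
          simp [slope_def_field]
        exact h2.mono_left (nhdsWithin_mono 0 fun x hx => ne_of_gt hx)
      have hder2 : HasDerivAt (fun t : ℝ => sKN K N (t*d)) d 0 := by
        have h := hasDerivAt_sKN K hN d 0
        simpa [cKN_zero] using h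
      have hg2lim : Tendsto (fun t => sKN K N (t*d)/t) (𝓝[>] (0:ℝ)) (𝓝 d) := by
        have h := hasDerivAt_iff_tendsto_slope.mp hder2
        have h2 : Tendsto (fun t => sKN K N (t*d)/t) (𝓝[≠] (0:ℝ)) (𝓝 d) := by
          refine h.congr' ?_
          filter_upwards [self_mem_nhdsWithin] with t ht
          simp [slope_def_field, sKN_zero]
        exact h2.mono_left (nhdsWithin_mono 0 fun x hx => ne_of_gt hx)
      have hPlim : Tendsto P (𝓝[>] (0:ℝ)) (𝓝 (d / sKN K N d * (b - cKN K N d * a))) := by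
        have hcomb : Tendsto
            (fun t => ((sKN K N ((1-t)*d) - sKN K N d)/t * a + sKN K N (t*d)/t * b)/sKN K N d)
            (𝓝[>] (0:ℝ)) (𝓝 ((-(d * cKN K N d) * a + d * b)/sKN K N d)) :=
          ((hg1lim.mul_const a).add (hg2lim.mul_const b)).div_const _
        have heq : ∀ᶠ t in 𝓝[>] (0:ℝ),
            ((sKN K N ((1-t)*d) - sKN K N d)/t * a + sKN K N (t*d)/t * b)/sKN K N d = P t := by
          filter_upwards [self_mem_nhdsWithin] with t ht
          have ht0 : (t:ℝ) ≠ 0 := ne_of_gt ht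
          rw [hP]
          field_simp
          ring
        have hval : (-(d * cKN K N d) * a + d * b)/sKN K N d
            = d / sKN K N d * (b - cKN K N d * a) := by
          field_simp
          ring
        rw [← hval]
        exact hcomb.congr' heq
      have hlim : Filter.liminf (fun t => ((P t : ℝ) : EReal)) (𝓝[>] (0:ℝ))
          = ((d / sKN K N d * (b - cKN K N d * a) : ℝ) : EReal) :=
        (EReal.tendsto_coe.mpr hPlim).liminf_eq
      have hfinal : dirDeriv (fun x => ((fN f N x : ℝ≥0∞) : EReal)) γ
          ≤ ((d / sKN K N d * (b - cKN K N d * a) : ℝ) : EReal) := by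
        unfold dirDeriv
        rw [← hlim]
        exact Filter.liminf_le_liminf hev
      refine hfinal.trans (le_of_eq ?_)
      rw [hg1, ← EReal.coe_sub, ← EReal.coe_mul]
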